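/- Let G ∈ [−1,1] and define the amplitude-damping-with-memory Kraus operators Ã₀ = !![1, 0; 0, G] and Ã₁ = !![0, √(1−G²); 0, 0]. Then for the projectors Π± = (1/2)(𝟙 ± Q(Θ,Φ)), one has Ã₀†Π±Ã₀ + Ã₁†Π±Ã₁ = (1/2)((1 ± (1−G²)cosΘ)𝟙 ± v·σ) with v = (G sinΘ cosΦ, −G sinΘ sinΦ, G² cosΘ); in particular the induced POVM has bias x = (1−G²)cosΘ and sharpness ‖v‖ = |G|√(sin²Θ + G² cos²Θ). -/
import Mathlib


open Matrix

/-- Pauli matrix σ₁. -/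
noncomputable def σ1 : Matrix (Fin 2) (Fin 2) ℂ := !![0, 1; 1, 0]
/-- Pauli matrix σ₂. -/
noncomputable def σ2 : Matrix (Fin 2) (Fin 2) ℂ := !![0, -Complex.I; Complex.I, 0]
/-- Pauli matrix σ₃. -/
noncomputable def σ3 : Matrix (Fin 2) (Fin 2) ℂ := !![1, 0; 0, -1]

/-- The three Pauli matrices, indexed. -/
noncomputable def pauli : Fin 3 → Matrix (Fin 2) (Fin 2) ℂ
  | 0 => σ1
  | 1 => σ2
  | 2 => σ3

/-- `v · σ = v₁σ₁ + v₂σ₂ + v₃σ₃` for `v ∈ ℝ³`. -/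
noncomputable def dotσ (v : Fin 3 → ℝ) : Matrix (Fin 2) (Fin 2) ℂ :=
  ∑ i, (v i : ℂ) • pauli i

/-- Euclidean norm of `v ∈ ℝ³`. -/
noncomputable def enorm3 (v : Fin 3 → ℝ) : ℝ := Real.sqrt (v 0 ^ 2 + v 1 ^ 2 + v 2 ^ 2)

/-- The dichotomic observable `Q(Θ,Φ)`. -/
noncomputable def Qobs (Θ Φ : ℝ) : Matrix (Fin 2) (Fin 2) ℂ :=
  !![(Real.cos Θ : ℂ), Complex.exp (Φ * Complex.I) * (Real.sin Θ : ℂ);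
     Complex.exp (-Φ * Complex.I) * (Real.sin Θ : ℂ), -(Real.cos Θ : ℂ)]

/-- The spectral projectors `Π_s = (1/2)(𝟙 + s·Q(Θ,Φ))`, sign `s = ±1`. -/
noncomputable def projQ (Θ Φ s : ℝ) : Matrix (Fin 2) (Fin 2) ℂ :=
  (1/2 : ℂ) • (1 + (s : ℂ) • Qobs Θ Φ)

/-- The conjugate amplitude-damping-with-memory channel maps `Π±` to the POVM
`(1/2)((1 ± (1−G²)cosΘ)𝟙 ± v·σ)` with `v = (G sinΘ cosΦ, −G sinΘ sinΦ, G² cosΘ)`,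
of bias `(1−G²)cosΘ` and sharpness `|G|√(sin²Θ + G²cos²Θ)`. -/
theorem stmt12 (G : ℝ) (hG : -1 ≤ G ∧ G ≤ 1) (Θ Φ : ℝ) :
    (∀ s : ℝ, s = 1 ∨ s = -1 →
      (!![1, 0; 0, (G : ℂ)])ᴴ * projQ Θ Φ s * !![1, 0; 0, (G : ℂ)]
        + (!![0, (Real.sqrt (1 - G ^ 2) : ℂ); 0, 0])ᴴ * projQ Θ Φ s
          * !![0, (Real.sqrt (1 - G ^ 2) : ℂ); 0, 0]
        = (1/2 : ℂ) • ((((1 + s * ((1 - G ^ 2) * Real.cos Θ) : ℝ)) : ℂ) • 1 + (s : ℂ) •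
            dotσ ![G * Real.sin Θ * Real.cos Φ, -(G * Real.sin Θ * Real.sin Φ),
                   G ^ 2 * Real.cos Θ])) ∧
    enorm3 ![G * Real.sin Θ * Real.cos Φ, -(G * Real.sin Θ * Real.sin Φ), G ^ 2 * Real.cos Θ]
      = |G| * Real.sqrt (Real.sin Θ ^ 2 + G ^ 2 * Real.cos Θ ^ 2) := by
  have hG2 : (0:ℝ) ≤ 1 - G ^ 2 := by nlinarith [hG.1, hG.2]
  have hr : (Real.sqrt (1 - G ^ 2)) ^ 2 = 1 - G ^ 2 := Real.sq_sqrt hG2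
  constructor
  · intro s _
    have hrC : ((Real.sqrt (1 - G ^ 2) : ℂ)) ^ 2 = 1 - (G:ℂ) ^ 2 := by
      rw [← Complex.ofReal_pow, hr]; push_cast; ring
    have hexp : Complex.exp (-(↑Φ * Complex.I))
        = ((Real.cos Φ : ℝ) : ℂ) - ((Real.sin Φ : ℝ) : ℂ) * Complex.I := by
      rw [show -((Φ:ℂ) * Complex.I) = ((-Φ : ℝ) : ℂ) * Complex.I by push_cast; ring]
      rw [Complex.exp_mul_I]
      push_cast [Complex.cos_neg, Complex.sin_neg]
      simp [← Complex.ofReal_cos, ← Complex.ofReal_sin]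
      ring
    ext i j
    fin_cases i <;> fin_cases j <;>
      simp [projQ, Qobs, dotσ, pauli, σ1, σ2, σ3, Matrix.mul_apply,
        Fin.sum_univ_succ, Matrix.one_apply, Complex.exp_mul_I, hexp,
        ← Complex.ofReal_cos, ← Complex.ofReal_sin]
    all_goals try ring1
    all_goals linear_combination ((1 + (s:ℂ) * ((Real.cos Θ : ℝ) : ℂ))/2) * hrC
  · unfold enorm3
    have : (G * Real.sin Θ * Real.cos Φ) ^ 2 + (-(G * Real.sin Θ * Real.sin Φ)) ^ 2
        + (G ^ 2 * Real.cos Θ) ^ 2 = G ^ 2 * (Real.sin Θ ^ 2 + G ^ 2 * Real.cos Θ ^ 2) := by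
      have h := Real.sin_sq_add_cos_sq Φ
      nlinarith [h]
    simp only [Matrix.cons_val_zero, Matrix.cons_val_one, Matrix.head_cons,
      Matrix.cons_val_fin_one]
    rw [show (![G * Real.sin Θ * Real.cos Φ, -(G * Real.sin Θ * Real.sin Φ), G ^ 2 * Real.cos Θ] : Fin 3 → ℝ) 2 = G ^ 2 * Real.cos Θ from rfl]
    rw [this, Real.sqrt_mul (sq_nonneg G), Real.sqrt_sq_eq_abs]
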